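/- Let r be an integer, m a positive integer coprime to r, and n a positive integer. With N = numerator of n·|binom(-r/m, n)| in lowest terms, N is coprime to m. -/

import Mathlib

open Finset

/-- The generalized binomial coefficient `x(x-1)⋯(x-k+1)/k!` for a rational `x`. -/
def ratChoose (x : ℚ) (k : ℕ) : ℚ :=
  (∏ i ∈ Finset.range k, (x - i)) / (Nat.factorial k : ℚ)

theorem numerator_coprime (r : ℤ) (m : ℕ) (hm : 0 < m) (hcop : Int.gcd r m = 1)
    (n : ℕ) (hn : 0 < n) :
    Int.gcd (((n : ℚ) * |ratChoose (-((r : ℚ) / (m : ℚ))) n|).num) m = 1 := by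
  have hm0 : (m : ℚ) ≠ 0 := Nat.cast_ne_zero.mpr hm.ne'
  set P : ℤ := ∏ i ∈ Finset.range n, (r + i * m) with hP
  -- rewrite the product
  have hprod : ∏ i ∈ Finset.range n, (-((r:ℚ) / m) - i)
      = ((-1)^n * P : ℤ) / (m:ℚ)^n := by
    have : ∀ i ∈ Finset.range n, (-((r:ℚ) / m) - i) = ((-(r + i * m) : ℤ) : ℚ) / (m:ℚ) := by
      intro i _
      push_cast
      field_simp
      ring
    rw [Finset.prod_congr rfl this, Finset.prod_div_distrib, Finset.prod_const]
    have : ∏ x ∈ Finset.range n, (-((r:ℚ) + x * m)) = (-1)^n * ∏ x ∈ Finset.range n, ((r:ℚ) + x * m) := by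
      calc ∏ x ∈ Finset.range n, (-((r:ℚ) + x * m))
          = ∏ x ∈ Finset.range n, ((-1) * ((r:ℚ) + x * m)) :=
            Finset.prod_congr rfl fun x _ => by ring
        _ = (∏ _x ∈ Finset.range n, (-1:ℚ)) * ∏ x ∈ Finset.range n, ((r:ℚ) + x * m) :=
            Finset.prod_mul_distrib
        _ = (-1)^n * ∏ x ∈ Finset.range n, ((r:ℚ) + x * m) := by
            rw [Finset.prod_const, Finset.card_range]
    push_cast [hP]
    rw [Finset.card_range, this]
    try ring
  have hq : (n : ℚ) * |ratChoose (-((r : ℚ) / (m : ℚ))) n|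
      = ((|P| : ℤ) : ℚ) / (((m:ℤ)^n * (n-1).factorial : ℤ) : ℚ) := by
    rw [ratChoose, hprod, abs_div, abs_div]
    rw [abs_of_pos (show (0:ℚ) < (m:ℚ)^n by positivity),
        abs_of_pos (show (0:ℚ) < ((n.factorial : ℚ)) by positivity)]
    have habs : |(((-1)^n * P : ℤ) : ℚ)| = ((|P| : ℤ) : ℚ) := by
      push_cast
      rw [abs_mul, abs_pow, abs_neg, abs_one, one_pow, one_mul]
    rw [habs]
    have hfac : ((n.factorial : ℚ)) = (n : ℚ) * ((n-1).factorial : ℚ) := by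
      rw [← Nat.cast_mul, Nat.mul_factorial_pred hn.ne']
    push_cast
    rw [hfac]
    have hn0 : (n : ℚ) ≠ 0 := Nat.cast_ne_zero.mpr hn.ne'
    field_simp
  have hden : ((m:ℤ)^n * (n-1).factorial : ℤ) ≠ 0 := by positivity
  have hdvd : ((n : ℚ) * |ratChoose (-((r : ℚ) / (m : ℚ))) n|).num ∣ |P| := by
    rw [hq, ← Rat.divInt_eq_div]
    exact Rat.num_dvd _ hden
  have hcp : IsCoprime P (m : ℤ) := by
    apply IsCoprime.prod_left
    intro i _
    have h0 : IsCoprime r (m : ℤ) := Int.isCoprime_iff_gcd_eq_one.mpr hcop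
    have := h0.add_mul_left_left (i : ℤ)
    rwa [mul_comm] at this
  have : IsCoprime (((n : ℚ) * |ratChoose (-((r : ℚ) / (m : ℚ))) n|).num) (m : ℤ) :=
    IsCoprime.of_isCoprime_of_dvd_left hcp ((dvd_abs _ _).mp hdvd)
  exact Int.isCoprime_iff_gcd_eq_one.mp this
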